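/- Let Γ be a finite abelian group, t a fixed-point free automorphism of Γ, X = Aff(Γ, t), G_X the enveloping group of X, and D_X = [G_X, G_X]. Then D_X is finite and nilpotent; moreover, if Γ is a p-group for a prime p, then D_X is a p-group. -/

import Mathlib

open scoped commutatorElement


/-- The affine rack `Aff(Γ, t)` on an abelian group `Γ` with automorphism `t`:
`x ▷ y = (x - t x) + t y`. -/
def affRack {Γ : Type*} [AddCommGroup Γ] (t : Γ ≃+ Γ) : Rack Γ where
  act x y := x - t x + t y
  self_distrib := by
    intro x y z
    simp only [map_add, map_sub]
    abel
  invAct x y := t.symm (y - x + t x)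
  left_inv := by
    intro x y
    have h : x - t x + t y - x + t x = t y := by abel
    show t.symm (x - t x + t y - x + t x) = y
    rw [h, AddEquiv.symm_apply_apply]
  right_inv := by
    intro x y
    show x - t x + t (t.symm (y - x + t x)) = y
    rw [AddEquiv.apply_symm_apply]
    abel



section Core

variable {G : Type*} [Group G] {Γ : Type*} [AddCommGroup Γ] [Finite Γ]

private lemma conj_eq_of_commute {c h : G} (hc : Commute c h) : h * c * h⁻¹ = c := by
  rw [hc.symm.eq, mul_inv_cancel_right]

private lemma conj_eq_of_commute' {c h : G} (hc : Commute c h) : h⁻¹ * c * h = c := by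
  rw [mul_assoc, hc.eq, ← mul_assoc, inv_mul_cancel, one_mul]

private lemma comm_mul_left' (a b c : G) : ⁅a*b, c⁆ = (a * ⁅b,c⁆ * a⁻¹) * ⁅a,c⁆ := by
  simp only [commutatorElement_def]; group

private lemma comm_mul_right' (a b c : G) : ⁅a, b*c⁆ = ⁅a,b⁆ * (b * ⁅a,c⁆ * b⁻¹) := by
  simp only [commutatorElement_def]; group

private lemma comm_inv_left' (a b : G) : ⁅a⁻¹, b⁆ = a⁻¹ * ⁅a,b⁆⁻¹ * a := by
  simp only [commutatorElement_def]; group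

private lemma comm_inv_right' (a b : G) : ⁅a, b⁻¹⁆ = b⁻¹ * ⁅a,b⁆⁻¹ * b := by
  simp only [commutatorElement_def]; group

theorem core_aux (g : Γ → G) (l r : Γ → Γ) (hl : Function.Surjective l)
    (h0 : g 0 = 1)
    (hI : ∀ a w : Γ, g (a + w) = g (l a) * g w * (g (r a))⁻¹) :
    Finite (Subgroup.closure (Set.range g)) ∧
      Group.IsNilpotent ↥(Subgroup.closure (Set.range g)) ∧
      ∀ p : ℕ, p.Prime → IsPGroup p (Multiplicative Γ) →
        IsPGroup p (Subgroup.closure (Set.range g)) := by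
  set H : Subgroup G := Subgroup.closure (Set.range g) with hHdef
  have hg : ∀ x, g x ∈ H := fun x => Subgroup.subset_closure ⟨x, rfl⟩
  -- Step 1: the elements (g (l (a+b)))⁻¹ * (g (l a) * g (l b)) commute with every g w
  have hz : ∀ a b w : Γ,
      Commute ((g (l (a+b)))⁻¹ * (g (l a) * g (l b))) (g w) := by
    intro a b w
    have e2 : ∀ w' : Γ, g (l (a+b)) * g w' * (g (r (a+b)))⁻¹
        = g (l a) * (g (l b) * g w' * (g (r b))⁻¹) * (g (r a))⁻¹ := by
      intro w'
      rw [← hI, ← hI, ← hI, add_assoc]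
    have e1 := e2 0
    rw [h0, mul_one, mul_one] at e1
    set V := g (l (a+b)) with hV
    set A := g (l a) with hA
    set B := g (l b) with hB
    set Ra := g (r a) with hRa
    set Rb := g (r b) with hRb
    set Rab := g (r (a+b)) with hRab
    set W := g w with hW
    have e1' : Rab⁻¹ = V⁻¹ * (A * (B * Rb⁻¹) * Ra⁻¹) := by
      rw [← e1, inv_mul_cancel_left]
    have e2w := e2 w
    rw [e1'] at e2w
    have e4 : V * (W * (V⁻¹ * (A * B))) = A * (B * W) := by
      have := congrArg (fun x => x * (Ra * Rb)) e2w
      simpa [mul_assoc] using this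
    show (V⁻¹ * (A * B)) * W = W * (V⁻¹ * (A * B))
    apply mul_left_cancel (a := V)
    rw [e4]
    group
  -- Step 2: commutators of generator values commute with every g w
  have hc1 : ∀ x y w : Γ, Commute (⁅g x, g y⁆) (g w) := by
    intro x y w
    obtain ⟨a, rfl⟩ := hl x
    obtain ⟨b, rfl⟩ := hl y
    have hz1 := hz a b
    have hz2 := hz b a
    rw [add_comm b a] at hz2
    have hABeq : ⁅g (l a), g (l b)⁆
        = ((g (l (a+b)))⁻¹ * (g (l a) * g (l b)))
          * ((g (l (a+b)))⁻¹ * (g (l b) * g (l a)))⁻¹ := by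
      have hcomm : Commute (((g (l (a+b)))⁻¹ * (g (l a) * g (l b)))
            * ((g (l (a+b)))⁻¹ * (g (l b) * g (l a)))⁻¹) (g (l (a+b))) :=
        (hz1 (l (a+b))).mul_left ((hz2 (l (a+b))).inv_left)
      have hid : ⁅g (l a), g (l b)⁆
          = g (l (a+b)) * ((((g (l (a+b)))⁻¹ * (g (l a) * g (l b)))
            * ((g (l (a+b)))⁻¹ * (g (l b) * g (l a)))⁻¹)) * (g (l (a+b)))⁻¹ := by
        simp only [commutatorElement_def]; group
      rw [hid, conj_eq_of_commute hcomm]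
    rw [hABeq]
    exact (hz1 w).mul_left ((hz2 w).inv_left)
  -- Step 3: these commutators commute with every element of H
  have hcH : ∀ x y : Γ, ∀ h ∈ H, Commute (⁅g x, g y⁆) h := by
    intro x y h hh
    induction hh using Subgroup.closure_induction with
    | mem u hu =>
        obtain ⟨w, rfl⟩ := hu
        exact hc1 x y w
    | one => exact Commute.one_right _
    | mul u v hu hv ihu ihv => exact ihu.mul_right ihv
    | inv u hu ihu => exact ihu.inv_right
  -- Step 4: multiplication law
  have hMul : ∀ a b : Γ, g a * g b = g (a + b) * (⁅g (r a), g b⁆)⁻¹ := by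
    intro a b
    have hF1 : g a = g (l a) * (g (r a))⁻¹ := by
      have := hI a 0
      rwa [add_zero, h0, mul_one] at this
    have hinv : ⁅g (r a), (g b)⁻¹⁆ = ⁅g (r a), g b⁆⁻¹ := by
      rw [comm_inv_right']
      exact conj_eq_of_commute' ((hc1 (r a) b b).inv_left)
    have hq : (g (a+b))⁻¹ * (g a * g b) = ⁅g (r a), (g b)⁻¹⁆ := by
      rw [hI a b, hF1]
      simp only [commutatorElement_def]
      group
    have hmain : g (a+b) * ((g (a+b))⁻¹ * (g a * g b)) = g a * g b :=
      mul_inv_cancel_left _ _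
    rw [hq, hinv] at hmain
    exact hmain.symm
  -- torsion bound
  set N : ℕ := Nat.card Γ with hNdef
  have hNpos : 0 < N := Nat.card_pos
  have hNs : ∀ x : Γ, N • x = 0 := fun x => card_nsmul_eq_zero'
  -- biadditivity of commutators
  have hbi : ∀ x y w : Γ, ⁅g (x+y), g w⁆ = ⁅g y, g w⁆ * ⁅g x, g w⁆ := by
    intro x y w
    have hxy : g (x+y) = (g x * g y) * ⁅g (r x), g y⁆ := by
      rw [hMul x y, inv_mul_cancel_right]
    rw [hxy, comm_mul_left',
      commutatorElement_eq_one_iff_commute.mpr (hc1 (r x) y w), mul_one,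
      mul_inv_cancel, one_mul, comm_mul_left', conj_eq_of_commute (hc1 y w x)]
  have hpowc : ∀ (n : ℕ) (x w : Γ), ⁅g (n • x), g w⁆ = ⁅g x, g w⁆ ^ n := by
    intro n x w
    induction n with
    | zero => rw [zero_smul, h0, commutatorElement_one_left, pow_zero]
    | succ n ih => rw [succ_nsmul, hbi, ih, ← pow_succ']
  have hcN : ∀ x w : Γ, ⁅g x, g w⁆ ^ N = 1 := by
    intro x w
    rw [← hpowc, hNs, h0, commutatorElement_one_left]
  -- the central subgroup C generated by commutators
  set C : Subgroup G := Subgroup.closure (Set.range (fun p : Γ × Γ => ⁅g p.1, g p.2⁆))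
    with hCdef
  have hcmem : ∀ x y : Γ, ⁅g x, g y⁆ ∈ C := fun x y =>
    Subgroup.subset_closure ⟨(x, y), rfl⟩
  have hCH : C ≤ H := by
    rw [hCdef]
    refine (Subgroup.closure_le _).mpr ?_
    rintro u ⟨p, rfl⟩
    show ⁅g p.1, g p.2⁆ ∈ H
    rw [commutatorElement_def]
    exact mul_mem (mul_mem (mul_mem (hg _) (hg _)) (inv_mem (hg _))) (inv_mem (hg _))
  have hCcomm : ∀ ξ ∈ C, ∀ h ∈ H, Commute ξ h := by
    intro ξ hξ
    induction hξ using Subgroup.closure_induction with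
    | mem u hu =>
        obtain ⟨p, rfl⟩ := hu
        exact hcH p.1 p.2
    | one => exact fun h _ => Commute.one_left h
    | mul u v hu hv ihu ihv => exact fun h hh => (ihu h hh).mul_left (ihv h hh)
    | inv u hu ihu => exact fun h hh => (ihu h hh).inv_left
  have hCN : ∀ ξ ∈ C, ξ ^ N = 1 := by
    intro ξ hξ
    induction hξ using Subgroup.closure_induction with
    | mem u hu =>
        obtain ⟨p, rfl⟩ := hu
        exact hcN p.1 p.2
    | one => exact one_pow N
    | mul u v hu hv ihu ihv =>
        rw [(hCcomm u hu v (hCH hv)).mul_pow, ihu, ihv, one_mul]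
    | inv u hu ihu => rw [inv_pow, ihu, inv_one]
  -- powers of generators
  have hgpow : ∀ (a : Γ) (n : ℕ), ∃ ξ ∈ C, (g a) ^ n = g (n • a) * ξ := by
    intro a n
    induction n with
    | zero =>
        exact ⟨1, one_mem C, by rw [pow_zero, zero_smul, h0, one_mul]⟩
    | succ n ih =>
        obtain ⟨ξ, hξ, he⟩ := ih
        refine ⟨⁅g (r (n • a)), g a⁆⁻¹ * ξ, mul_mem (inv_mem (hcmem _ _)) hξ, ?_⟩
        rw [pow_succ, he, mul_assoc, (hCcomm ξ hξ (g a) (hg a)).eq, ← mul_assoc,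
          hMul (n • a) a, ← succ_nsmul]
        group
  have hgNN : ∀ a : Γ, (g a) ^ (N * N) = 1 := by
    intro a
    obtain ⟨ξ, hξ, he⟩ := hgpow a N
    rw [pow_mul, he, hNs, h0, one_mul, hCN ξ hξ]
  -- normal form for elements of H
  have hK : ∀ h ∈ H, ∃ a : Γ, ∃ ξ ∈ C, h = g a * ξ := by
    intro h hh
    induction hh using Subgroup.closure_induction with
    | mem u hu =>
        obtain ⟨x, rfl⟩ := hu
        exact ⟨x, 1, one_mem C, (mul_one _).symm⟩
    | one => exact ⟨0, 1, one_mem C, by rw [h0, one_mul]⟩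
    | mul u v hu hv ihu ihv =>
        obtain ⟨a, ξ, hξ, rfl⟩ := ihu
        obtain ⟨b, η, hη, rfl⟩ := ihv
        refine ⟨a + b, ⁅g (r a), g b⁆⁻¹ * (ξ * η),
          mul_mem (inv_mem (hcmem _ _)) (mul_mem hξ hη), ?_⟩
        have hcomm : ξ * g b = g b * ξ := (hCcomm ξ hξ (g b) (hg b)).eq
        calc g a * ξ * (g b * η) = g a * (ξ * g b) * η := by group
          _ = g a * (g b * ξ) * η := by rw [hcomm]
          _ = (g a * g b) * (ξ * η) := by group
          _ = g (a + b) * ⁅g (r a), g b⁆⁻¹ * (ξ * η) := by rw [hMul]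
          _ = g (a + b) * (⁅g (r a), g b⁆⁻¹ * (ξ * η)) := by group
    | inv u hu ihu =>
        obtain ⟨a, ξ, hξ, rfl⟩ := ihu
        have hainv : (g a)⁻¹ = g (-a) * ⁅g (r a), g (-a)⁆ := by
          have hthis := hMul a (-a)
          rw [add_neg_cancel, h0, one_mul] at hthis
          have h1 : g a * (g (-a) * ⁅g (r a), g (-a)⁆) = 1 := by
            rw [← mul_assoc, hthis, inv_mul_cancel]
          exact inv_eq_of_mul_eq_one_right h1
        refine ⟨-a, ξ⁻¹ * ⁅g (r a), g (-a)⁆,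
          mul_mem (inv_mem hξ) (hcmem _ _), ?_⟩
        have hcomm : ξ⁻¹ * g (-a) = g (-a) * ξ⁻¹ :=
          ((hCcomm ξ hξ (g (-a)) (hg (-a))).inv_left).eq
        calc (g a * ξ)⁻¹ = ξ⁻¹ * (g a)⁻¹ := by group
          _ = ξ⁻¹ * (g (-a) * ⁅g (r a), g (-a)⁆) := by rw [hainv]
          _ = (ξ⁻¹ * g (-a)) * ⁅g (r a), g (-a)⁆ := by group
          _ = (g (-a) * ξ⁻¹) * ⁅g (r a), g (-a)⁆ := by rw [hcomm]
          _ = g (-a) * (ξ⁻¹ * ⁅g (r a), g (-a)⁆) := by group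
  -- C is finite
  haveI hfinT : Finite ↥(Set.range (fun p : Γ × Γ => ⁅g p.1, g p.2⁆)) :=
    (Set.finite_range _).to_subtype
  haveI hCfg : Group.FG ↥C := Group.closure_finite_fg _
  letI hCcg : CommGroup ↥C :=
    { (inferInstance : Group ↥C) with
      mul_comm := fun x y => Subtype.ext ((hCcomm x.1 x.2 y.1 (hCH y.2)).eq) }
  have hCtor : Monoid.IsTorsion ↥C := by
    intro x
    refine isOfFinOrder_iff_pow_eq_one.mpr ⟨N, hNpos, ?_⟩
    ext
    push_cast
    exact hCN x.1 x.2
  haveI hCfin : Finite ↥C := CommGroup.finite_of_fg_torsion ↥C hCtor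
  -- H is finite
  haveI hHfin : Finite H := by
    have hsub : (H : Set G) ⊆ Set.range (fun p : Γ × ↥C => g p.1 * (p.2 : G)) := by
      intro h hh
      obtain ⟨a, ξ, hξ, he⟩ := hK h hh
      exact ⟨(a, ⟨ξ, hξ⟩), he.symm⟩
    exact ((Set.finite_range _).subset hsub).to_subtype
  -- all commutators of H are central in H
  have hcent : ∀ u ∈ H, ∀ v ∈ H, ∀ m ∈ H, Commute ⁅u, v⁆ m := by
    intro u hu
    induction hu using Subgroup.closure_induction with
    | mem x hx =>
        obtain ⟨x, rfl⟩ := hx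
        intro v hv
        induction hv using Subgroup.closure_induction with
        | mem y hy =>
            obtain ⟨y, rfl⟩ := hy
            exact hcH x y
        | one =>
            intro m hm
            rw [commutatorElement_one_right]
            exact Commute.one_left m
        | mul y z hy hz ihy ihz =>
            intro m hm
            rw [comm_mul_right', conj_eq_of_commute (ihz y hy)]
            exact (ihy m hm).mul_left (ihz m hm)
        | inv y hy ihy =>
            intro m hm
            rw [comm_inv_right', conj_eq_of_commute' ((ihy y hy).inv_left)]
            exact (ihy m hm).inv_left
    | one =>
        intro v hv m hm
        rw [commutatorElement_one_left]
        exact Commute.one_left m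
    | mul x y hx hy ihx ihy =>
        intro v hv m hm
        rw [comm_mul_left', conj_eq_of_commute (ihy v hv x hx)]
        exact ((ihy v hv m hm)).mul_left (ihx v hv m hm)
    | inv x hx ihx =>
        intro v hv m hm
        rw [comm_inv_left', conj_eq_of_commute' ((ihx v hv x hx).inv_left)]
        exact (ihx v hv m hm).inv_left
  refine ⟨hHfin, ⟨⟨2, ?_⟩⟩, ?_⟩
  · -- nilpotency: upper central series reaches top at 2
    rw [Subgroup.eq_top_iff']
    intro x
    rw [mem_upperCentralSeries_succ_iff]
    intro y
    rw [upperCentralSeries_one, Subgroup.mem_center_iff]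
    intro m
    have hco : Commute ⁅(x : G), (y : G)⁆ (m : G) :=
      hcent x.1 x.2 y.1 y.2 m.1 m.2
    apply Subtype.ext
    push_cast
    have : ((x * y * x⁻¹ * y⁻¹ : ↥H) : G) = ⁅(x : G), (y : G)⁆ := rfl
    calc (m : G) * ((x * y * x⁻¹ * y⁻¹ : ↥H) : G)
        = (m : G) * ⁅(x : G), (y : G)⁆ := by rw [this]
      _ = ⁅(x : G), (y : G)⁆ * (m : G) := hco.symm.eq
      _ = ((x * y * x⁻¹ * y⁻¹ : ↥H) : G) * (m : G) := by rw [this]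
  · -- p-group
    intro p hp hpg
    haveI : Fact p.Prime := ⟨hp⟩
    obtain ⟨k, hk⟩ := IsPGroup.iff_card.mp hpg
    have hNcard : N = p ^ k := by
      rw [hNdef, ← Nat.card_congr Multiplicative.toAdd, hk]
    intro x
    refine ⟨k + k, ?_⟩
    have hxN : (x : G) ^ (N * N) = 1 := by
      obtain ⟨a, ξ, hξ, he⟩ := hK x.1 x.2
      have hcomm : Commute (g a) ξ := (hCcomm ξ hξ (g a) (hg a)).symm
      rw [he, hcomm.mul_pow, hgNN, one_mul, pow_mul, hCN ξ hξ, one_pow]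
    apply Subtype.ext
    push_cast
    rw [pow_add, ← hNcard]
    exact hxN

end Core

section AffineHelpers

variable {Γ : Type*} [AddCommGroup Γ]

private def affE (t : Γ ≃+ Γ) (x : Γ) : @Rack.EnvelGroup Γ (affRack t) :=
  @Rack.toEnvelGroup Γ (affRack t) x

private lemma affE_closure (t : Γ ≃+ Γ) :
    Subgroup.closure (Set.range (affE t)) = ⊤ := by
  rw [Subgroup.eq_top_iff']
  intro x
  induction x using Quotient.inductionOn with
  | h a =>
    induction a with
    | unit => exact one_mem _
    | incl y => exact Subgroup.subset_closure ⟨y, rfl⟩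
    | mul a b iha ihb => exact mul_mem iha ihb
    | inv a iha => exact inv_mem iha

private lemma affE_mul (t : Γ ≃+ Γ) (x y : Γ) :
    affE t x * affE t y = affE t (x - t x + t y) * affE t x := by
  have h : affE t (x - t x + t y) = affE t x * affE t y * (affE t x)⁻¹ :=
    @ShelfHom.map_act Γ (Quandle.Conj (@Rack.EnvelGroup Γ (affRack t)))
      (affRack t).toShelf _ (@Rack.toEnvelGroup Γ (affRack t)) x y
  rw [h]
  group


end AffineHelpers

/-- Let `Γ` be a finite abelian group, `t` a fixed-point free automorphism
of `Γ`, `X = Aff(Γ, t)`, `G_X` the enveloping group of `X` and `D_X = [G_X, G_X]`. Then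
`D_X` is finite and nilpotent, and if `Γ` is a `p`-group for a prime `p` then `D_X` is a
`p`-group. -/
theorem commutator_envelGroup_affRack_finite_nilpotent
    {Γ : Type*} [AddCommGroup Γ] [Finite Γ] (t : Γ ≃+ Γ)
    (hfpf : ∀ x : Γ, t x = x → x = 0) :
    Finite (commutator (@Rack.EnvelGroup Γ (affRack t))) ∧
    Group.IsNilpotent (commutator (@Rack.EnvelGroup Γ (affRack t))) ∧
    ∀ p : ℕ, p.Prime → IsPGroup p (Multiplicative Γ) →
      IsPGroup p (commutator (@Rack.EnvelGroup Γ (affRack t))) := by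
  classical
  set E : Γ → @Rack.EnvelGroup Γ (affRack t) := affE t with hEdef
  set gg : Γ → @Rack.EnvelGroup Γ (affRack t) := fun x => E x * (E 0)⁻¹ with hggdef
  set H : Subgroup (@Rack.EnvelGroup Γ (affRack t)) := Subgroup.closure (Set.range gg)
    with hHdef
  have hmulE : ∀ x y : Γ, E x * E y = E (x - t x + t y) * E x := affE_mul t
  -- the "shift" identity
  have hshift : ∀ w : Γ, (E 0)⁻¹ * E w = E (t.symm w) * (E 0)⁻¹ := by
    intro w
    have h := hmulE 0 (t.symm w)
    rw [map_zero, sub_zero, zero_add, t.apply_symm_apply] at h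
    -- h : E 0 * E (t.symm w) = E w * E 0
    apply mul_left_cancel (a := E 0)
    rw [mul_inv_cancel_left, ← mul_assoc, h, mul_inv_cancel_right]
  -- pair form
  have hpair0 : ∀ u w : Γ, gg u * gg w = E u * E (t.symm w) * ((E 0)⁻¹ * (E 0)⁻¹) := by
    intro u w
    show (E u * (E 0)⁻¹) * (E w * (E 0)⁻¹) = _
    calc (E u * (E 0)⁻¹) * (E w * (E 0)⁻¹)
        = E u * ((E 0)⁻¹ * E w) * (E 0)⁻¹ := by group
      _ = E u * (E (t.symm w) * (E 0)⁻¹) * (E 0)⁻¹ := by rw [hshift]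
      _ = E u * E (t.symm w) * ((E 0)⁻¹ * (E 0)⁻¹) := by group
  have hR' : ∀ u w : Γ, gg u * gg w = gg (u - t u + w) * gg (t u) := by
    intro u w
    rw [hpair0, hpair0 (u - t u + w) (t u), t.symm_apply_apply,
      show E u * E (t.symm w) = E (u - t u + t (t.symm w)) * E u from hmulE _ _,
      t.apply_symm_apply]
  -- bijectivity of 1 - t
  have hs_inj : Function.Injective (fun x : Γ => x - t x) := by
    have : ∀ a : Γ, a - t a = 0 → a = 0 := by
      intro a ha
      exact hfpf a (sub_eq_zero.mp ha).symm
    intro a b hab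
    simp only at hab
    have h1 : (a - b) - t (a - b) = 0 := by
      rw [map_sub]
      have h2 : a - b - (t a - t b) = (a - t a) - (b - t b) := by abel
      rw [h2, hab, sub_self]
    have := this _ h1
    rwa [sub_eq_zero] at this
  have hs_surj : Function.Surjective (fun x : Γ => x - t x) :=
    Finite.injective_iff_surjective.mp hs_inj
  set σ : Γ → Γ := Function.surjInv hs_surj with hσdef
  have hσ : ∀ a : Γ, σ a - t (σ a) = a := fun a => Function.surjInv_eq hs_surj a
  have hσ_surj : Function.Surjective σ := by
    intro x
    refine ⟨x - t x, hs_inj ?_⟩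
    show σ (x - t x) - t (σ (x - t x)) = x - t x
    exact hσ _
  -- hypotheses of the core lemma
  have h0' : gg 0 = 1 := by
    show E 0 * (E 0)⁻¹ = 1
    rw [mul_inv_cancel]
  have hI' : ∀ a w : Γ, gg (a + w) = gg (σ a) * gg w * (gg (t (σ a)))⁻¹ := by
    intro a w
    have h := hR' (σ a) w
    rw [hσ a] at h
    rw [h, mul_inv_cancel_right]
  obtain ⟨hfin, hnil, hpg⟩ := core_aux gg σ (fun a => t (σ a)) hσ_surj h0' hI'
  have hmemH : ∀ x : Γ, gg x ∈ H := fun x => Subgroup.subset_closure ⟨x, rfl⟩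
  -- conjugation formulas
  have hconj1 : ∀ x y : Γ,
      E x * gg y * (E x)⁻¹ = gg (x - t x + t y) * (gg (x - t x))⁻¹ := by
    intro x y
    have h2 : E x * E 0 = E (x - t x) * E x := by
      have h := hmulE x 0
      rwa [map_zero, add_zero] at h
    have hL : E x * gg y * (E x)⁻¹ = (E x * E y) * (E x * E 0)⁻¹ := by
      show E x * (E y * (E 0)⁻¹) * (E x)⁻¹ = _
      group
    rw [hL, hmulE x y, h2]
    show _ = (E (x - t x + t y) * (E 0)⁻¹) * (E (x - t x) * (E 0)⁻¹)⁻¹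
    group
  have hinvconj : ∀ x y : Γ, (E x)⁻¹ * (E y * E x) = E (t.symm (y - x + t x)) := by
    intro x y
    have h1 : E x * E (t.symm (y - x + t x)) = E y * E x := by
      have h := hmulE x (t.symm (y - x + t x))
      rw [t.apply_symm_apply, show x - t x + (y - x + t x) = y by abel] at h
      exact h
    rw [← h1, inv_mul_cancel_left]
  have hconj2 : ∀ x y : Γ,
      (E x)⁻¹ * gg y * E x
        = gg (t.symm (y - x + t x)) * (gg (t.symm (0 - x + t x)))⁻¹ := by
    intro x y
    have hL : (E x)⁻¹ * gg y * E x
        = ((E x)⁻¹ * (E y * E x)) * ((E x)⁻¹ * (E 0 * E x))⁻¹ := by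
      show (E x)⁻¹ * (E y * (E 0)⁻¹) * E x = _
      group
    rw [hL, hinvconj, hinvconj]
    show _ = (E (t.symm (y - x + t x)) * (E 0)⁻¹) * (E (t.symm (0 - x + t x)) * (E 0)⁻¹)⁻¹
    group
  -- H is normal
  have st1 : ∀ x : Γ, ∀ n ∈ H, E x * n * (E x)⁻¹ ∈ H := by
    intro x n hn
    induction hn using Subgroup.closure_induction with
    | mem u hu =>
        obtain ⟨y, rfl⟩ := hu
        rw [hconj1]
        exact mul_mem (hmemH _) (inv_mem (hmemH _))
    | one =>
        rw [mul_one, mul_inv_cancel]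
        exact one_mem H
    | mul u v hu hv ihu ihv =>
        have h : E x * (u * v) * (E x)⁻¹ = (E x * u * (E x)⁻¹) * (E x * v * (E x)⁻¹) := by
          group
        rw [h]; exact mul_mem ihu ihv
    | inv u hu ihu =>
        have h : E x * u⁻¹ * (E x)⁻¹ = (E x * u * (E x)⁻¹)⁻¹ := by group
        rw [h]; exact inv_mem ihu
  have st2 : ∀ x : Γ, ∀ n ∈ H, (E x)⁻¹ * n * E x ∈ H := by
    intro x n hn
    induction hn using Subgroup.closure_induction with
    | mem u hu =>
        obtain ⟨y, rfl⟩ := hu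
        rw [show (E x)⁻¹ * gg y * E x
            = gg (t.symm (y - x + t x)) * (gg (t.symm (0 - x + t x)))⁻¹ from hconj2 x y]
        exact mul_mem (hmemH _) (inv_mem (hmemH _))
    | one =>
        rw [mul_one, inv_mul_cancel]
        exact one_mem H
    | mul u v hu hv ihu ihv =>
        have h : (E x)⁻¹ * (u * v) * E x = ((E x)⁻¹ * u * E x) * ((E x)⁻¹ * v * E x) := by
          group
        rw [h]; exact mul_mem ihu ihv
    | inv u hu ihu =>
        have h : (E x)⁻¹ * u⁻¹ * E x = ((E x)⁻¹ * u * E x)⁻¹ := by group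
        rw [h]; exact inv_mem ihu
  have hnormal : H.Normal := by
    rw [← Subgroup.normalizer_eq_top_iff]
    have hle : Subgroup.closure (Set.range E) ≤ Subgroup.normalizer (H : Set (@Rack.EnvelGroup Γ (affRack t))) := by
      refine (Subgroup.closure_le _).mpr ?_
      rintro u ⟨x, rfl⟩
      rw [SetLike.mem_coe, Subgroup.mem_normalizer_iff]
      intro n
      constructor
      · exact st1 x n
      · intro hn
        have heq : (E x)⁻¹ * (E x * n * (E x)⁻¹) * E x = n := by group
        rw [← heq]
        exact st2 x _ hn
    have htop := affE_closure t
    rw [← hEdef] at htop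
    exact le_antisymm le_top (htop ▸ hle)
  haveI := hnormal
  -- H contains the commutator subgroup
  have hcomm_le : commutator (@Rack.EnvelGroup Γ (affRack t)) ≤ H := by
    rw [commutator_def]
    refine Subgroup.commutator_le.mpr ?_
    intro a _ b _
    rw [← QuotientGroup.eq_one_iff ⁅a, b⁆]
    have hmap : ((⁅a, b⁆ : @Rack.EnvelGroup Γ (affRack t)) : _ ⧸ H)
        = ⁅((a : _ ⧸ H)), ((b : _ ⧸ H))⁆ :=
      map_commutatorElement (QuotientGroup.mk' H) a b
    rw [hmap]
    refine commutatorElement_eq_one_iff_commute.mpr ?_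
    -- every element of the quotient is a power of the class of E 0
    have htop : ∀ q : (@Rack.EnvelGroup Γ (affRack t)) ⧸ H,
        q ∈ Subgroup.zpowers ((E 0 : @Rack.EnvelGroup Γ (affRack t)) : _ ⧸ H) := by
      intro q
      have h1 : (⊤ : Subgroup ((@Rack.EnvelGroup Γ (affRack t)) ⧸ H))
          ≤ Subgroup.zpowers ((E 0 : @Rack.EnvelGroup Γ (affRack t)) : _ ⧸ H) := by
        rw [← Subgroup.map_top_of_surjective (QuotientGroup.mk' H)
          (QuotientGroup.mk'_surjective H)]
        have h2 := affE_closure t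
        rw [← hEdef] at h2
        rw [← h2, MonoidHom.map_closure]
        refine (Subgroup.closure_le _).mpr ?_
        rintro v ⟨u, ⟨x, rfl⟩, rfl⟩
        have h3 : (QuotientGroup.mk' H) (E x) = (QuotientGroup.mk' H) (E 0) := by
          show ((E x : @Rack.EnvelGroup Γ (affRack t)) : _ ⧸ H)
            = ((E 0 : @Rack.EnvelGroup Γ (affRack t)) : _ ⧸ H)
          rw [QuotientGroup.eq]
          have h1 : (gg x)⁻¹ ∈ H := inv_mem (hmemH x)
          have h4 := hnormal.conj_mem _ h1 ((E x)⁻¹)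
          have h5 : (E x)⁻¹ * (gg x)⁻¹ * (E x)⁻¹⁻¹ = (E x)⁻¹ * E 0 := by
            show (E x)⁻¹ * (E x * (E 0)⁻¹)⁻¹ * (E x)⁻¹⁻¹ = _
            group
          rwa [h5] at h4
        rw [h3]
        exact Subgroup.mem_zpowers _
      exact h1 (Subgroup.mem_top q)
    obtain ⟨m, hm⟩ := htop ((a : _ ⧸ H))
    obtain ⟨n, hn⟩ := htop ((b : _ ⧸ H))
    rw [← hm, ← hn]
    exact (Commute.refl _).zpow_zpow m n
  -- H is contained in the commutator subgroup
  have hle2 : H ≤ commutator (@Rack.EnvelGroup Γ (affRack t)) := by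
    rw [hHdef]
    refine (Subgroup.closure_le _).mpr ?_
    rintro u ⟨x, rfl⟩
    have h1 : E (σ x) * E 0 * (E (σ x))⁻¹ = E x := by
      have h := hmulE (σ x) 0
      rw [map_zero, add_zero, hσ x] at h
      rw [h, mul_inv_cancel_right]
    have hx : gg x = ⁅E (σ x), E 0⁆ := by
      rw [commutatorElement_def, h1]
    rw [SetLike.mem_coe, hx, commutator_def]
    exact Subgroup.commutator_mem_commutator (Subgroup.mem_top _) (Subgroup.mem_top _)
  have hHeq : commutator (@Rack.EnvelGroup Γ (affRack t)) = H :=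
    le_antisymm hcomm_le hle2
  rw [hHeq]
  exact ⟨hfin, hnil, hpg⟩
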